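/- If B is a real n×n matrix having a unique eigenvalue and e^B lies in 𝕋_n^+(ℝ) (lower triangular with constant positive diagonal), then B itself lies in 𝕋_n(ℝ) (lower triangular with constant diagonal). -/

import Mathlib

open Polynomial NormedSpace
open scoped Nat

/-- `A` is lower triangular with all diagonal entries equal (the set `𝕋_n(K)`). -/
def LowerTriConstDiag {K : Type*} [Semiring K] {n : ℕ}
    (A : Matrix (Fin n) (Fin n) K) : Prop :=
  (∀ i j : Fin n, i < j → A i j = 0) ∧ ∀ i j : Fin n, A i i = A j j

section Aux

variable {n : ℕ}

/-- Lower triangular matrices are closed under multiplication. -/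
lemma lowerTri_mul {A C : Matrix (Fin n) (Fin n) ℝ}
    (hA : ∀ i j : Fin n, i < j → A i j = 0) (hC : ∀ i j : Fin n, i < j → C i j = 0) :
    ∀ i j : Fin n, i < j → (A * C) i j = 0 := by
  intro i j hij
  rw [Matrix.mul_apply]
  refine Finset.sum_eq_zero fun k _ => ?_
  rcases lt_or_ge i k with h | h
  · rw [hA i k h, zero_mul]
  · rw [hC k j (lt_of_le_of_lt h hij), mul_zero]

lemma lowerTri_pow {A : Matrix (Fin n) (Fin n) ℝ}
    (hA : ∀ i j : Fin n, i < j → A i j = 0) (k : ℕ) :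
    ∀ i j : Fin n, i < j → (A ^ k) i j = 0 := by
  induction k with
  | zero => intro i j hij; simp [Matrix.one_apply, (ne_of_lt hij)]
  | succ k ih =>
      rw [pow_succ]
      exact lowerTri_mul ih hA

/-- Diagonal entries of powers of a lower triangular matrix. -/
lemma diag_pow_lowerTri {A : Matrix (Fin n) (Fin n) ℝ}
    (hA : ∀ i j : Fin n, i < j → A i j = 0) (k : ℕ) (i : Fin n) :
    (A ^ k) i i = (A i i) ^ k := by
  induction k with
  | zero => simp [Matrix.one_apply]
  | succ k ih =>
      rw [pow_succ, pow_succ, Matrix.mul_apply, ← ih]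
      refine Finset.sum_eq_single i (fun b _ hb => ?_) (by simp)
      rcases lt_or_ge i b with h | h
      · rw [lowerTri_pow hA k i b h, zero_mul]
      · rw [hA b i (lt_of_le_of_ne h hb), mul_zero]

/-- Exponential of a nilpotent matrix is a finite sum. -/
lemma exp_nilpotent_eq_sum {A : Matrix (Fin n) (Fin n) ℝ} (hA : A ^ n = 0) :
    exp A = ∑ m ∈ Finset.range n, (m ! : ℝ)⁻¹ • A ^ m := by
  rw [exp_eq_tsum (𝕂 := ℝ)]
  refine tsum_eq_sum fun m hm => ?_
  have hnm : n ≤ m := by simpa using hm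
  have : A ^ m = 0 := by
    rw [← Nat.add_sub_cancel' hnm, pow_add, hA, zero_mul]
  rw [this, smul_zero]

end Aux

/-- Lemma 3.1(ii): if `B` is a real matrix with a unique eigenvalue `μ` and
`exp B ∈ 𝕋_n⁺(ℝ)` (lower triangular with constant positive diagonal), then
`B ∈ 𝕋_n(ℝ)`. -/
theorem lowerTri_of_exp_lowerTri_pos
    (n : ℕ) (B : Matrix (Fin n) (Fin n) ℝ) (μ : ℝ)
    (hchar : B.charpoly = (X - C μ) ^ n)
    (htri : LowerTriConstDiag (exp B))
    (hpos : ∀ i, 0 < (exp B) i i) :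
    LowerTriConstDiag B := by
  classical
  set N : Matrix (Fin n) (Fin n) ℝ := B - μ • 1 with hNdef
  -- Cayley–Hamilton : N is nilpotent
  have hN : N ^ n = 0 := by
    have h := B.aeval_self_charpoly
    rw [hchar] at h
    simpa [hNdef, map_pow, map_sub, aeval_X, aeval_C, Algebra.algebraMap_eq_smul_one] using h
  have hB : B = μ • 1 + N := by rw [hNdef]; abel
  -- exp N is a positive multiple of exp B, hence lower triangular
  have hcomm : Commute (μ • (1 : Matrix (Fin n) (Fin n) ℝ)) N :=
    (Commute.one_left N).smul_left μ
  have hdiag : μ • (1 : Matrix (Fin n) (Fin n) ℝ) = Matrix.diagonal fun _ => μ := by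
    ext i j
    by_cases h : i = j <;> simp [Matrix.one_apply, Matrix.diagonal, h]
  have hexpScalar : exp (μ • (1 : Matrix (Fin n) (Fin n) ℝ))
      = Real.exp μ • (1 : Matrix (Fin n) (Fin n) ℝ) := by
    rw [hdiag, Matrix.exp_diagonal]
    ext i j
    rcases eq_or_ne i j with h | h
    · subst h
      rw [Matrix.diagonal_apply_eq, Matrix.smul_apply, Matrix.one_apply_eq, smul_eq_mul,
        mul_one, Pi.coe_exp]
      exact congrFun Real.exp_eq_exp_ℝ.symm μ
    · simp [Matrix.diagonal_apply_ne _ h, Matrix.one_apply_ne h]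
  have hexpB : exp B = Real.exp μ • exp N := by
    rw [hB, Matrix.exp_add_of_commute _ _ hcomm, hexpScalar, smul_mul_assoc, one_mul]
  have hexpNtri : ∀ i j : Fin n, i < j → (exp N) i j = 0 := by
    intro i j hij
    have h0 := htri.1 i j hij
    rw [hexpB, Matrix.smul_apply, smul_eq_mul] at h0
    exact (mul_eq_zero.mp h0).resolve_left (Real.exp_ne_zero μ)
  -- powers of exp N are lower triangular; exp (k • N) expands as a polynomial in k
  have hexpPow : ∀ k : ℕ, ∀ i j : Fin n, i < j → ((exp N) ^ k) i j = 0 :=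
    fun k => lowerTri_pow hexpNtri k
  have hkey : ∀ (k : ℕ) (i j : Fin n), i < j →
      ∑ m ∈ Finset.range n, ((k : ℝ) ^ m * (m ! : ℝ)⁻¹) * (N ^ m) i j = 0 := by
    intro k i j hij
    have hkN : ((k : ℝ) • N) ^ n = 0 := by
      rw [_root_.smul_pow, hN, smul_zero]
    have h1 : exp ((k : ℝ) • N) = (exp N) ^ k := by
      rw [Nat.cast_smul_eq_nsmul ℝ k N]
      exact Matrix.exp_nsmul k N
    have h2 := exp_nilpotent_eq_sum hkN
    rw [h1] at h2
    have h3 := congrFun (congrFun h2 i) j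
    rw [hexpPow k i j hij] at h3
    have h4 : (0 : ℝ) = ∑ m ∈ Finset.range n,
        ((m ! : ℝ)⁻¹ * ((k : ℝ) ^ m * (N ^ m) i j)) := by
      simpa [Matrix.sum_apply, Matrix.smul_apply, _root_.smul_pow, smul_eq_mul, mul_assoc] using h3
    calc ∑ m ∈ Finset.range n, ((k : ℝ) ^ m * (m ! : ℝ)⁻¹) * (N ^ m) i j
        = ∑ m ∈ Finset.range n, ((m ! : ℝ)⁻¹ * ((k : ℝ) ^ m * (N ^ m) i j)) :=
          Finset.sum_congr rfl fun m _ => by ring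
      _ = 0 := h4.symm
  -- the polynomial argument: entries of N^m above the diagonal vanish
  have hNm : ∀ (m : ℕ), m < n → ∀ i j : Fin n, i < j → (N ^ m) i j = 0 := by
    intro m hm i j hij
    set p : Polynomial ℝ :=
      ∑ l ∈ Finset.range n, Polynomial.C ((l ! : ℝ)⁻¹ * (N ^ l) i j) * Polynomial.X ^ l with hp
    have hroot : ∀ k : ℕ, p.IsRoot (k : ℝ) := by
      intro k
      have := hkey k i j hij
      simp only [Polynomial.IsRoot, hp, Polynomial.eval_finset_sum, Polynomial.eval_mul,
        Polynomial.eval_pow, Polynomial.eval_C, Polynomial.eval_X]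
      rw [← this]
      exact Finset.sum_congr rfl fun l _ => by ring
    have hp0 : p = 0 := by
      refine Polynomial.eq_zero_of_infinite_isRoot p ?_
      refine Set.infinite_of_injective_forall_mem (f := (Nat.cast : ℕ → ℝ))
        Nat.cast_injective ?_
      intro k
      exact hroot k
    have hcoeff : p.coeff m = (m ! : ℝ)⁻¹ * (N ^ m) i j := by
      rw [hp, Polynomial.finset_sum_coeff]
      rw [Finset.sum_eq_single m
        (fun l _ hl => by rw [Polynomial.coeff_C_mul, Polynomial.coeff_X_pow,
          if_neg (fun h => hl h.symm), mul_zero])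
        (fun h => absurd (Finset.mem_range.mpr hm) h)]
      rw [Polynomial.coeff_C_mul, Polynomial.coeff_X_pow, if_pos rfl, mul_one]
    rw [hp0, Polynomial.coeff_zero] at hcoeff
    have hfac : ((m ! : ℝ))⁻¹ ≠ 0 := by
      simp [Nat.factorial_ne_zero]
    exact (mul_eq_zero.mp hcoeff.symm).resolve_left hfac
  -- N is lower triangular
  have hNtri : ∀ i j : Fin n, i < j → N i j = 0 := by
    intro i j hij
    have h1n : 1 < n := by
      have h1 : (i : ℕ) < (j : ℕ) := hij
      have h2 := j.isLt
      omega
    have := hNm 1 h1n i j hij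
    simpa using this
  -- diagonal of N is zero
  have hNdiag : ∀ i : Fin n, N i i = 0 := by
    intro i
    have hn0 : n ≠ 0 := by have := i.isLt; omega
    have : (N i i) ^ n = 0 := by
      rw [← diag_pow_lowerTri hNtri n i, hN, Matrix.zero_apply]
    exact pow_eq_zero_iff hn0 |>.mp this
  constructor
  · intro i j hij
    have := hNtri i j hij
    rw [hB]
    simp [Matrix.one_apply, (ne_of_lt hij), this]
  · intro i j
    rw [hB]
    simp [Matrix.one_apply, hNdiag i, hNdiag j]
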